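/- Consider a linear (path/corridor) graph on vertices 1,…,n with arcs between consecutive vertices, arc weights w, and deadlines d. If the DET-STRAT problem on this linear graph admits any feasible cyclic patrolling solution, then the 'sweep' sequence ⟨1,2,…,n,n−1,…,2,1⟩ (visiting vertices in linear order and back) is itself a feasible solution. -/

import Mathlib

def Wsum {V : Type*} (w : V → V → ℕ) (σ : ℕ → V) (k m : ℕ) : ℕ :=
  ∑ j ∈ Finset.Ico k m, w (σ j) (σ (j + 1))

def Feasible {V : Type*} (a : V → V → Prop) (w : V → V → ℕ) (d : V → ℕ)
    (σ : ℕ → V) (p : ℕ) : Prop :=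
  0 < p ∧ (∀ k, σ (k + p) = σ k) ∧ (∀ k, a (σ k) (σ (k + 1))) ∧
    (∀ t : V, ∃ k < p, σ k = t) ∧
    (∀ t : V, ∀ k, ∃ m, k < m ∧ σ m = t ∧ Wsum w σ k m ≤ d t)

/-- Adjacency of the linear (path/corridor) graph on `n` vertices: `i` and `j`
are adjacent iff they are consecutive. -/
def LinAdj (n : ℕ) (i j : Fin n) : Prop := (i : ℕ) + 1 = (j : ℕ) ∨ (j : ℕ) + 1 = (i : ℕ)

/-- The sweep sequence `⟨1,2,…,n,n−1,…,2,1⟩` (0-indexed), of period `2n−2`. -/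
def sweep (n : ℕ) (hn : 0 < n) (k : ℕ) : Fin n :=
  ⟨min (k % (2 * (n - 1))) (2 * (n - 1) - k % (2 * (n - 1))), by
    by_cases h2 : 2 * (n - 1) = 0
    · rw [h2]; simpa using hn
    · have hr : k % (2 * (n - 1)) < 2 * (n - 1) := Nat.mod_lt _ (Nat.pos_of_ne_zero h2)
      set r := k % (2 * (n - 1))
      omega⟩

def up (n : ℕ) (w : Fin n → Fin n → ℕ) (c : ℕ) : ℕ :=
  if h : c + 1 < n then w ⟨c, by omega⟩ ⟨c + 1, h⟩ else 0

def down (n : ℕ) (w : Fin n → Fin n → ℕ) (c : ℕ) : ℕ :=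
  if h : c + 1 < n then w ⟨c + 1, h⟩ ⟨c, by omega⟩ else 0

lemma Wsum_mono {V : Type*} (w : V → V → ℕ) (σ : ℕ → V) {k m k' m' : ℕ}
    (h1 : k' ≤ k) (h2 : m ≤ m') : Wsum w σ k m ≤ Wsum w σ k' m' :=
  Finset.sum_le_sum_of_subset (Finset.Ico_subset_Ico h1 h2)

lemma Wsum_split {V : Type*} (w : V → V → ℕ) (σ : ℕ → V) {k l m : ℕ}
    (h1 : k ≤ l) (h2 : l ≤ m) : Wsum w σ k m = Wsum w σ k l + Wsum w σ l m :=
  (Finset.sum_Ico_consecutive _ h1 h2).symm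

lemma cross_up {n : ℕ} (σ : ℕ → Fin n)
    (hadj : ∀ j, (σ j : ℕ) + 1 = (σ (j+1) : ℕ) ∨ (σ (j+1) : ℕ) + 1 = (σ j : ℕ)) :
    ∀ m k {c : ℕ}, k ≤ m → (σ k : ℕ) ≤ c → c < (σ m : ℕ) →
      ∃ j, k ≤ j ∧ j < m ∧ (σ j : ℕ) = c ∧ (σ (j+1) : ℕ) = c + 1 := by
  intro m
  induction m with
  | zero =>
    intro k c hk h1 h2
    have : k = 0 := by omega
    subst this
    omega
  | succ m ih =>
    intro k c hk h1 h2
    rcases Nat.lt_or_ge (σ m : ℕ) (c+1) with hlt | hge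
    · have hadjm := hadj m
      have hkm : k ≤ m := by
        by_contra hc
        have : k = m + 1 := by omega
        rw [this] at h1; omega
      exact ⟨m, hkm, by omega, by omega, by omega⟩
    · have hkm : k ≤ m := by
        by_contra hc
        have : k = m + 1 := by omega
        rw [this] at h1; omega
      obtain ⟨j, hj1, hj2, hj3, hj4⟩ := ih k hkm h1 hge
      exact ⟨j, hj1, by omega, hj3, hj4⟩

lemma cross_down {n : ℕ} (σ : ℕ → Fin n)
    (hadj : ∀ j, (σ j : ℕ) + 1 = (σ (j+1) : ℕ) ∨ (σ (j+1) : ℕ) + 1 = (σ j : ℕ)) :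
    ∀ m k {c : ℕ}, k ≤ m → c < (σ k : ℕ) → (σ m : ℕ) ≤ c →
      ∃ j, k ≤ j ∧ j < m ∧ (σ j : ℕ) = c + 1 ∧ (σ (j+1) : ℕ) = c := by
  intro m
  induction m with
  | zero =>
    intro k c hk h1 h2
    have : k = 0 := by omega
    subst this
    omega
  | succ m ih =>
    intro k c hk h1 h2
    rcases Nat.lt_or_ge c (σ m : ℕ) with hgt | hle
    · have hadjm := hadj m
      have hkm : k ≤ m := by
        by_contra hc
        have : k = m + 1 := by omega
        rw [this] at h1; omega
      exact ⟨m, hkm, by omega, by omega, by omega⟩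
    · have hkm : k ≤ m := by
        by_contra hc
        have : k = m + 1 := by omega
        rw [this] at h1; omega
      obtain ⟨j, hj1, hj2, hj3, hj4⟩ := ih k hkm h1 hle
      exact ⟨j, hj1, by omega, hj3, hj4⟩

lemma walk_up {n : ℕ} (w : Fin n → Fin n → ℕ) (σ : ℕ → Fin n)
    (hadj : ∀ j, (σ j : ℕ) + 1 = (σ (j+1) : ℕ) ∨ (σ (j+1) : ℕ) + 1 = (σ j : ℕ))
    (k m : ℕ) (hkm : k ≤ m) :
    ∑ c ∈ Finset.Ico (σ k : ℕ) (σ m : ℕ), up n w c ≤ Wsum w σ k m := by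
  classical
  set G : ℕ → ℕ := fun c =>
    if h : (σ k : ℕ) ≤ c ∧ c < (σ m : ℕ) then
      Classical.choose (cross_up σ hadj m k hkm h.1 h.2) else 0 with hG
  have hGspec : ∀ c, (σ k : ℕ) ≤ c → c < (σ m : ℕ) →
      k ≤ G c ∧ G c < m ∧ (σ (G c) : ℕ) = c ∧ (σ (G c + 1) : ℕ) = c + 1 := by
    intro c h1 h2
    simp only [hG, dif_pos (And.intro h1 h2)]
    exact Classical.choose_spec (cross_up σ hadj m k hkm h1 h2)
  have h1 : ∑ c ∈ Finset.Ico (σ k : ℕ) (σ m : ℕ), up n w c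
      = ∑ c ∈ Finset.Ico (σ k : ℕ) (σ m : ℕ), w (σ (G c)) (σ (G c + 1)) := by
    refine Finset.sum_congr rfl ?_
    intro c hc
    rw [Finset.mem_Ico] at hc
    obtain ⟨_, _, h3, h4⟩ := hGspec c hc.1 hc.2
    have hcn : c + 1 < n := lt_of_le_of_lt (by omega : c + 1 ≤ (σ m : ℕ)) (σ m).isLt
    rw [up, dif_pos hcn]
    congr 1
    · exact Fin.ext (by simpa using h3.symm)
    · exact Fin.ext (by simpa using h4.symm)
  have h2 : ∑ c ∈ Finset.Ico (σ k : ℕ) (σ m : ℕ), w (σ (G c)) (σ (G c + 1))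
      = ∑ j ∈ (Finset.Ico (σ k : ℕ) (σ m : ℕ)).image G, w (σ j) (σ (j + 1)) := by
    rw [Finset.sum_image]
    intro x hx y hy hxy
    rw [Finset.mem_coe, Finset.mem_Ico] at hx hy
    have h3x := (hGspec x hx.1 hx.2).2.2.1
    have h3y := (hGspec y hy.1 hy.2).2.2.1
    rw [hxy] at h3x; omega
  rw [h1, h2, Wsum]
  apply Finset.sum_le_sum_of_subset
  intro j hj
  simp only [Finset.mem_image] at hj
  obtain ⟨c, hc, rfl⟩ := hj
  rw [Finset.mem_Ico] at hc ⊢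
  obtain ⟨hg1, hg2, _, _⟩ := hGspec c hc.1 hc.2
  exact ⟨hg1, hg2⟩

lemma walk_down {n : ℕ} (w : Fin n → Fin n → ℕ) (σ : ℕ → Fin n)
    (hadj : ∀ j, (σ j : ℕ) + 1 = (σ (j+1) : ℕ) ∨ (σ (j+1) : ℕ) + 1 = (σ j : ℕ))
    (k m : ℕ) (hkm : k ≤ m) :
    ∑ c ∈ Finset.Ico (σ m : ℕ) (σ k : ℕ), down n w c ≤ Wsum w σ k m := by
  classical
  set G : ℕ → ℕ := fun c =>
    if h : c < (σ k : ℕ) ∧ (σ m : ℕ) ≤ c then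
      Classical.choose (cross_down σ hadj m k hkm h.1 h.2) else 0 with hG
  have hGspec : ∀ c, (σ m : ℕ) ≤ c → c < (σ k : ℕ) →
      k ≤ G c ∧ G c < m ∧ (σ (G c) : ℕ) = c + 1 ∧ (σ (G c + 1) : ℕ) = c := by
    intro c h1 h2
    simp only [hG, dif_pos (And.intro h2 h1)]
    exact Classical.choose_spec (cross_down σ hadj m k hkm h2 h1)
  have h1 : ∑ c ∈ Finset.Ico (σ m : ℕ) (σ k : ℕ), down n w c
      = ∑ c ∈ Finset.Ico (σ m : ℕ) (σ k : ℕ), w (σ (G c)) (σ (G c + 1)) := by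
    refine Finset.sum_congr rfl ?_
    intro c hc
    rw [Finset.mem_Ico] at hc
    obtain ⟨_, _, h3, h4⟩ := hGspec c hc.1 hc.2
    have hcn : c + 1 < n := lt_of_le_of_lt (by omega : c + 1 ≤ (σ k : ℕ)) (σ k).isLt
    rw [down, dif_pos hcn]
    congr 1
    · exact Fin.ext (by simpa using h3.symm)
    · exact Fin.ext (by simpa using h4.symm)
  have h2 : ∑ c ∈ Finset.Ico (σ m : ℕ) (σ k : ℕ), w (σ (G c)) (σ (G c + 1))
      = ∑ j ∈ (Finset.Ico (σ m : ℕ) (σ k : ℕ)).image G, w (σ j) (σ (j + 1)) := by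
    rw [Finset.sum_image]
    intro x hx y hy hxy
    rw [Finset.mem_coe, Finset.mem_Ico] at hx hy
    have h3x := (hGspec x hx.1 hx.2).2.2.1
    have h3y := (hGspec y hy.1 hy.2).2.2.1
    rw [hxy] at h3x; omega
  rw [h1, h2, Wsum]
  apply Finset.sum_le_sum_of_subset
  intro j hj
  simp only [Finset.mem_image] at hj
  obtain ⟨c, hc, rfl⟩ := hj
  rw [Finset.mem_Ico] at hc ⊢
  obtain ⟨hg1, hg2, _, _⟩ := hGspec c hc.1 hc.2
  exact ⟨hg1, hg2⟩

lemma sweep_coe (n : ℕ) (hn : 0 < n) (k : ℕ) :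
    (sweep n hn k : ℕ) = min (k % (2 * (n - 1))) (2 * (n - 1) - k % (2 * (n - 1))) := rfl

lemma visit_pair {n : ℕ} (w : Fin n → Fin n → ℕ) (d : Fin n → ℕ) (σ : ℕ → Fin n) (p : ℕ)
    (hf : Feasible (LinAdj n) w d σ p) (t u : Fin n) :
    ∃ k k0 m, k ≤ k0 ∧ k0 ≤ m ∧ σ k = t ∧ σ k0 = u ∧ σ m = t ∧ Wsum w σ k m ≤ d t := by
  classical
  obtain ⟨hp, hper, _, hcov, hdl⟩ := hf
  obtain ⟨kt, hkt, hσkt⟩ := hcov t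
  obtain ⟨ku, hku, hσku⟩ := hcov u
  have hq : ∀ q x, σ (x + q * p) = σ x := by
    intro q
    induction q with
    | zero => intro x; simp
    | succ q ih =>
      intro x
      have hx : x + (q + 1) * p = (x + q * p) + p := by ring
      rw [hx, hper, ih]
  set k0 := ku + (kt + p) * p with hk0
  have hσk0 : σ k0 = u := by rw [hk0, hq]; exact hσku
  have hvt : σ (kt + p) = t := by
    have := hper kt; rw [this]; exact hσkt
  have hle : kt + p ≤ k0 := by
    have : kt + p ≤ (kt + p) * p := Nat.le_mul_of_pos_right _ hp
    omega
  set k := Nat.findGreatest (fun j => σ j = t) k0 with hk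
  have hσk : σ k = t := Nat.findGreatest_spec (P := fun j => σ j = t) hle hvt
  have hkk0 : k ≤ k0 := Nat.findGreatest_le k0
  obtain ⟨m, hkm, hσm, hWm⟩ := hdl t k
  have hk0m : k0 < m := by
    by_contra hc
    push_neg at hc
    exact Nat.findGreatest_is_greatest hkm (by omega) hσm
  exact ⟨k, k0, m, hkk0, by omega, hσk, hσk0, hσm, hWm⟩

lemma sweep_add_mul {n : ℕ} (hn : 0 < n) (x q : ℕ) :
    sweep n hn (x + q * (2 * (n - 1))) = sweep n hn x :=
  Fin.ext (by rw [sweep_coe, sweep_coe, Nat.add_mul_mod_self_right])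

lemma sweep_shift {n : ℕ} (hn : 0 < n) (w : Fin n → Fin n → ℕ) (a b q : ℕ) :
    Wsum w (sweep n hn) (a + q * (2 * (n - 1))) (b + q * (2 * (n - 1)))
      = Wsum w (sweep n hn) a b := by
  rw [Wsum, Wsum, Finset.sum_Ico_eq_sum_range, Finset.sum_Ico_eq_sum_range]
  have hlen : b + q * (2 * (n - 1)) - (a + q * (2 * (n - 1))) = b - a := by omega
  rw [hlen]
  refine Finset.sum_congr rfl ?_
  intro i _
  have e1 : a + q * (2 * (n - 1)) + i = (a + i) + q * (2 * (n - 1)) := by omega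
  have e2 : a + i + q * (2 * (n - 1)) + 1 = (a + i + 1) + q * (2 * (n - 1)) := by omega
  rw [e1, e2, sweep_add_mul, sweep_add_mul]

lemma sweep_up_sum {n : ℕ} (hn : 0 < n) (hn2 : 2 ≤ n) (w : Fin n → Fin n → ℕ)
    (a b : ℕ) (hb : b ≤ n - 1) :
    Wsum w (sweep n hn) a b = ∑ c ∈ Finset.Ico a b, up n w c := by
  rw [Wsum]
  refine Finset.sum_congr rfl ?_
  intro j hj
  rw [Finset.mem_Ico] at hj
  have hjP : j < 2 * (n - 1) := by omega
  have hj1P : j + 1 < 2 * (n - 1) ∨ j + 1 = n - 1 ∨ n = 2 := by omega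
  have hj1lt : j + 1 < n := by omega
  have e1 : sweep n hn j = ⟨j, by omega⟩ := by
    apply Fin.ext
    rw [sweep_coe, Nat.mod_eq_of_lt hjP]
    simp only []
    omega
  have e2 : sweep n hn (j + 1) = ⟨j + 1, hj1lt⟩ := by
    apply Fin.ext
    rw [sweep_coe, Nat.mod_eq_of_lt (by omega : j + 1 < 2 * (n - 1))]
    simp only []
    omega
  rw [e1, e2, up, dif_pos hj1lt]

lemma key_step {n : ℕ} (hn : 0 < n) (hn2 : 2 ≤ n) (w : Fin n → Fin n → ℕ)
    (j : ℕ) (hj1 : n - 1 ≤ j) (hj2 : j < 2 * (n - 1)) :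
    w (sweep n hn j) (sweep n hn (j + 1)) = down n w (2 * (n - 1) - j - 1) := by
  have e1 : sweep n hn j = ⟨2 * (n - 1) - j, by omega⟩ := by
    apply Fin.ext
    rw [sweep_coe, Nat.mod_eq_of_lt hj2]
    simp only []
    omega
  have e2 : sweep n hn (j + 1) = ⟨2 * (n - 1) - j - 1, by omega⟩ := by
    apply Fin.ext
    rw [sweep_coe]
    rcases Nat.lt_or_ge (j + 1) (2 * (n - 1)) with hlt | hge
    · rw [Nat.mod_eq_of_lt hlt]
      simp only []
      omega
    · have hz : (j + 1) % (2 * (n - 1)) = 0 := by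
        have hEq : j + 1 = 2 * (n - 1) := by omega
        rw [hEq]
        exact Nat.mod_self _
      rw [hz]
      simp only []
      omega
  rw [e1, e2, down]
  split
  · congr 1
    exact Fin.ext (by simp only []; omega)
  · exfalso
    omega

lemma sweep_down_sum {n : ℕ} (hn : 0 < n) (hn2 : 2 ≤ n) (w : Fin n → Fin n → ℕ)
    (a b : ℕ) (ha : n - 1 ≤ a) (hab : a ≤ b) (hb : b ≤ 2 * (n - 1)) :
    Wsum w (sweep n hn) a b
      = ∑ c ∈ Finset.Ico (2 * (n - 1) - b) (2 * (n - 1) - a), down n w c := by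
  rw [Wsum, Finset.sum_Ico_eq_sum_range, Finset.sum_Ico_eq_sum_range]
  have hlen : 2 * (n - 1) - a - (2 * (n - 1) - b) = b - a := by omega
  rw [hlen]
  conv_rhs => rw [← Finset.sum_range_reflect]
  refine Finset.sum_congr rfl ?_
  intro i hi
  rw [Finset.mem_range] at hi
  have harg : 2 * (n - 1) - b + (b - a - 1 - i) = 2 * (n - 1) - (a + i) - 1 := by omega
  rw [harg]
  exact key_step hn hn2 w (a + i) (by omega) (by omega)

/-- If the DET-STRAT problem on a linear graph admits any feasible cyclic
patrolling solution, then the sweep sequence is itself a feasible solution. -/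
theorem linear_sweep_feasible (n : ℕ) (hn : 2 ≤ n)
    (w : Fin n → Fin n → ℕ) (d : Fin n → ℕ)
    (h : ∃ σ p, Feasible (LinAdj n) w d σ p) :
    Feasible (LinAdj n) w d (sweep n (by omega)) (2 * n - 2) := by
  obtain ⟨σ, p, hf⟩ := h
  have hn0 : 0 < n := by omega
  have hadj : ∀ j, (σ j : ℕ) + 1 = (σ (j+1) : ℕ) ∨ (σ (j+1) : ℕ) + 1 = (σ j : ℕ) :=
    hf.2.2.1
  refine ⟨by omega, ?_, ?_, ?_, ?_⟩
  · -- periodicity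
    intro k
    show sweep n hn0 (k + (2 * n - 2)) = sweep n hn0 k
    have e : k + (2 * n - 2) = k + 1 * (2 * (n - 1)) := by omega
    rw [e, sweep_add_mul]
  · -- adjacency
    intro k
    show LinAdj n (sweep n hn0 k) (sweep n hn0 (k + 1))
    have hrP : k % (2 * (n - 1)) < 2 * (n - 1) := Nat.mod_lt _ (by omega)
    have h1p : 1 % (2 * (n - 1)) = 1 := Nat.mod_eq_of_lt (by omega)
    have hs : (k + 1) % (2 * (n - 1)) = (k % (2 * (n - 1)) + 1) % (2 * (n - 1)) := by
      rw [Nat.add_mod, h1p]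
    unfold LinAdj
    rw [sweep_coe, sweep_coe, hs]
    rcases Nat.lt_or_ge (k % (2 * (n - 1)) + 1) (2 * (n - 1)) with hlt | hge
    · rw [Nat.mod_eq_of_lt hlt]
      omega
    · have heq : k % (2 * (n - 1)) + 1 = 2 * (n - 1) := by omega
      rw [heq, Nat.mod_self]
      omega
  · -- coverage
    intro t
    refine ⟨(t : ℕ), by have := t.isLt; omega, ?_⟩
    show sweep n hn0 (t : ℕ) = t
    apply Fin.ext
    rw [sweep_coe, Nat.mod_eq_of_lt (by have := t.isLt; omega : (t : ℕ) < 2 * (n - 1))]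
    have := t.isLt
    omega
  · -- deadlines
    intro t k
    show ∃ m, k < m ∧ sweep n hn0 m = t ∧ Wsum w (sweep n hn0) k m ≤ d t
    have htn : (t : ℕ) < n := t.isLt
    have hrP : k % (2 * (n - 1)) < 2 * (n - 1) := Nat.mod_lt _ (by omega)
    have hkeq : k = k % (2 * (n - 1)) + k / (2 * (n - 1)) * (2 * (n - 1)) :=
      (Nat.mod_add_div' k (2 * (n - 1))).symm
    -- the two deadline lower bounds coming from the feasible solution σ
    have hR : ∑ c ∈ Finset.Ico (t : ℕ) (n - 1), up n w c
        + ∑ c ∈ Finset.Ico (t : ℕ) (n - 1), down n w c ≤ d t := by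
      obtain ⟨k1, k01, m1, h12, h23, hs1, hs2, hs3, hW⟩ :=
        visit_pair w d σ p hf t ⟨n - 1, by omega⟩
      have hu := walk_up w σ hadj k1 k01 h12
      have hd := walk_down w σ hadj k01 m1 h23
      rw [hs1, hs2] at hu
      rw [hs2, hs3] at hd
      have hv : ((⟨n - 1, by omega⟩ : Fin n) : ℕ) = n - 1 := rfl
      rw [hv] at hu hd
      calc ∑ c ∈ Finset.Ico (t : ℕ) (n - 1), up n w c
            + ∑ c ∈ Finset.Ico (t : ℕ) (n - 1), down n w c
          ≤ Wsum w σ k1 k01 + Wsum w σ k01 m1 := Nat.add_le_add hu hd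
        _ = Wsum w σ k1 m1 := (Wsum_split w σ h12 h23).symm
        _ ≤ d t := hW
    have hL : ∑ c ∈ Finset.Ico 0 (t : ℕ), down n w c
        + ∑ c ∈ Finset.Ico 0 (t : ℕ), up n w c ≤ d t := by
      obtain ⟨k1, k01, m1, h12, h23, hs1, hs2, hs3, hW⟩ :=
        visit_pair w d σ p hf t ⟨0, by omega⟩
      have hd := walk_down w σ hadj k1 k01 h12
      have hu := walk_up w σ hadj k01 m1 h23
      rw [hs1, hs2] at hd
      rw [hs2, hs3] at hu
      have hv : ((⟨0, by omega⟩ : Fin n) : ℕ) = 0 := rfl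
      rw [hv] at hu hd
      calc ∑ c ∈ Finset.Ico 0 (t : ℕ), down n w c
            + ∑ c ∈ Finset.Ico 0 (t : ℕ), up n w c
          ≤ Wsum w σ k1 k01 + Wsum w σ k01 m1 := Nat.add_le_add hd hu
        _ = Wsum w σ k1 m1 := (Wsum_split w σ h12 h23).symm
        _ ≤ d t := hW
    by_cases h1 : k % (2 * (n - 1)) < (t : ℕ)
    · -- the sweep is below t on its way up: continue up to t
      refine ⟨k + ((t : ℕ) - k % (2 * (n - 1))), by omega, ?_, ?_⟩
      · apply Fin.ext
        rw [sweep_coe]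
        have e : k + ((t : ℕ) - k % (2 * (n - 1)))
            = (t : ℕ) + k / (2 * (n - 1)) * (2 * (n - 1)) := by omega
        rw [e, Nat.add_mul_mod_self_right,
          Nat.mod_eq_of_lt (by omega : (t : ℕ) < 2 * (n - 1))]
        omega
      · have e : k + ((t : ℕ) - k % (2 * (n - 1)))
            = (t : ℕ) + k / (2 * (n - 1)) * (2 * (n - 1)) := by omega
        calc Wsum w (sweep n hn0) k (k + ((t : ℕ) - k % (2 * (n - 1))))
            = Wsum w (sweep n hn0) (k % (2 * (n - 1))) (t : ℕ) := by
              rw [← sweep_shift hn0 w (k % (2 * (n - 1))) (t : ℕ) (k / (2 * (n - 1)))]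
              exact congrArg₂ (Wsum w (sweep n hn0)) hkeq (by omega)
          _ ≤ Wsum w (sweep n hn0) 0 (t : ℕ) := Wsum_mono _ _ (Nat.zero_le _) le_rfl
          _ = ∑ c ∈ Finset.Ico 0 (t : ℕ), up n w c :=
              sweep_up_sum hn0 hn w 0 (t : ℕ) (by omega)
          _ ≤ d t := le_trans (Nat.le_add_left _ _) hL
    · by_cases h2 : k % (2 * (n - 1)) < 2 * (n - 1) - (t : ℕ)
      · -- continue up to the right end and come back down to t
        refine ⟨k + (2 * (n - 1) - (t : ℕ) - k % (2 * (n - 1))), by omega, ?_, ?_⟩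
        · apply Fin.ext
          rw [sweep_coe]
          have e : k + (2 * (n - 1) - (t : ℕ) - k % (2 * (n - 1)))
              = (2 * (n - 1) - (t : ℕ)) + k / (2 * (n - 1)) * (2 * (n - 1)) := by omega
          rw [e, Nat.add_mul_mod_self_right]
          by_cases htv0 : (t : ℕ) = 0
          · rw [htv0]
            simp [Nat.mod_self]
          · rw [Nat.mod_eq_of_lt (by omega : 2 * (n - 1) - (t : ℕ) < 2 * (n - 1))]
            omega
        · have e : k + (2 * (n - 1) - (t : ℕ) - k % (2 * (n - 1)))
              = (2 * (n - 1) - (t : ℕ)) + k / (2 * (n - 1)) * (2 * (n - 1)) := by omega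
          have hsplit1 : (t : ℕ) ≤ n - 1 := by omega
          have hsplit2 : n - 1 ≤ 2 * (n - 1) - (t : ℕ) := by omega
          calc Wsum w (sweep n hn0) k (k + (2 * (n - 1) - (t : ℕ) - k % (2 * (n - 1))))
              = Wsum w (sweep n hn0) (k % (2 * (n - 1))) (2 * (n - 1) - (t : ℕ)) := by
                rw [← sweep_shift hn0 w (k % (2 * (n - 1))) (2 * (n - 1) - (t : ℕ))
                  (k / (2 * (n - 1)))]
                exact congrArg₂ (Wsum w (sweep n hn0)) hkeq (by omega)
            _ ≤ Wsum w (sweep n hn0) (t : ℕ) (2 * (n - 1) - (t : ℕ)) :=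
                Wsum_mono _ _ (by omega) le_rfl
            _ = Wsum w (sweep n hn0) (t : ℕ) (n - 1)
                + Wsum w (sweep n hn0) (n - 1) (2 * (n - 1) - (t : ℕ)) :=
                Wsum_split w _ hsplit1 hsplit2
            _ = ∑ c ∈ Finset.Ico (t : ℕ) (n - 1), up n w c
                + ∑ c ∈ Finset.Ico (t : ℕ) (n - 1), down n w c := by
                rw [sweep_up_sum hn0 hn w (t : ℕ) (n - 1) le_rfl,
                  sweep_down_sum hn0 hn w (n - 1) (2 * (n - 1) - (t : ℕ)) le_rfl hsplit2
                    (by omega),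
                  show 2 * (n - 1) - (2 * (n - 1) - (t : ℕ)) = (t : ℕ) by omega,
                  show 2 * (n - 1) - (n - 1) = n - 1 by omega]
            _ ≤ d t := hR
      · -- on the way down: continue down to the left end and come back up to t
        refine ⟨k + (2 * (n - 1) + (t : ℕ) - k % (2 * (n - 1))), by omega, ?_, ?_⟩
        · apply Fin.ext
          rw [sweep_coe]
          have e : k + (2 * (n - 1) + (t : ℕ) - k % (2 * (n - 1)))
              = ((t : ℕ) + 2 * (n - 1)) + k / (2 * (n - 1)) * (2 * (n - 1)) := by omega
          rw [e, Nat.add_mul_mod_self_right, Nat.add_mod_right,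
            Nat.mod_eq_of_lt (by omega : (t : ℕ) < 2 * (n - 1))]
          omega
        · have e : k + (2 * (n - 1) + (t : ℕ) - k % (2 * (n - 1)))
              = (2 * (n - 1) + (t : ℕ)) + k / (2 * (n - 1)) * (2 * (n - 1)) := by omega
          have hb1 : 2 * (n - 1) - (t : ℕ) ≤ 2 * (n - 1) := by omega
          have hb2 : 2 * (n - 1) ≤ 2 * (n - 1) + (t : ℕ) := by omega
          calc Wsum w (sweep n hn0) k (k + (2 * (n - 1) + (t : ℕ) - k % (2 * (n - 1))))
              = Wsum w (sweep n hn0) (k % (2 * (n - 1))) (2 * (n - 1) + (t : ℕ)) := by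
                rw [← sweep_shift hn0 w (k % (2 * (n - 1))) (2 * (n - 1) + (t : ℕ))
                  (k / (2 * (n - 1)))]
                exact congrArg₂ (Wsum w (sweep n hn0)) hkeq (by omega)
            _ ≤ Wsum w (sweep n hn0) (2 * (n - 1) - (t : ℕ)) (2 * (n - 1) + (t : ℕ)) :=
                Wsum_mono _ _ (by omega) le_rfl
            _ = Wsum w (sweep n hn0) (2 * (n - 1) - (t : ℕ)) (2 * (n - 1))
                + Wsum w (sweep n hn0) (2 * (n - 1)) (2 * (n - 1) + (t : ℕ)) :=
                Wsum_split w _ hb1 hb2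
            _ = ∑ c ∈ Finset.Ico 0 (t : ℕ), down n w c
                + ∑ c ∈ Finset.Ico 0 (t : ℕ), up n w c := by
                have e2 : Wsum w (sweep n hn0) (2 * (n - 1)) (2 * (n - 1) + (t : ℕ))
                    = Wsum w (sweep n hn0) 0 (t : ℕ) := by
                  rw [← sweep_shift hn0 w 0 (t : ℕ) 1]
                  exact congrArg₂ (Wsum w (sweep n hn0)) (by omega) (by omega)
                rw [e2, sweep_up_sum hn0 hn w 0 (t : ℕ) (by omega),
                  sweep_down_sum hn0 hn w (2 * (n - 1) - (t : ℕ)) (2 * (n - 1))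
                    (by omega) hb1 le_rfl,
                  show 2 * (n - 1) - 2 * (n - 1) = 0 by omega,
                  show 2 * (n - 1) - (2 * (n - 1) - (t : ℕ)) = (t : ℕ) by omega]
            _ ≤ d t := hL
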